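/- Let Z be a complex Zinbiel algebra containing elements e_1, e_2, …, e_k such that e_1 ∘ e_i = e_{i+1} for all 1 ≤ i ≤ k−1. Then for all i, j ≥ 1 with 2 ≤ i+j ≤ k one has e_i ∘ e_j = C(i+j−1, j) · e_{i+j}, where C(i+j−1, j) denotes the binomial coefficient (i+j−1 choose j). -/
import Mathlib


open Module Submodule

/-- The Zinbiel identity for a bilinear operation `mul` on a complex vector space:
`(x∘y)∘z = x∘(y∘z) + x∘(z∘y)`. -/
def IsZinbiel {Z : Type*} [AddCommGroup Z] [Module ℂ Z] (mul : Z →ₗ[ℂ] Z →ₗ[ℂ] Z) : Prop :=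
  ∀ x y z : Z, mul (mul x y) z = mul x (mul y z) + mul x (mul z y)

/-- Lemma 2 (`lemma1`): in a complex Zinbiel algebra with elements `e_1, …, e_k`
satisfying `e_1 ∘ e_i = e_{i+1}` for `1 ≤ i ≤ k-1`, one has
`e_i ∘ e_j = C(i+j-1, j) • e_{i+j}` whenever `2 ≤ i + j ≤ k`. -/
theorem zinbiel_binomial_products
    {Z : Type*} [AddCommGroup Z] [Module ℂ Z]
    (mul : Z →ₗ[ℂ] Z →ₗ[ℂ] Z) (hzin : IsZinbiel mul)
    (k : ℕ) (e : ℕ → Z)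
    (he : ∀ i, 1 ≤ i → i ≤ k - 1 → mul (e 1) (e i) = e (i + 1)) :
    ∀ i j, 1 ≤ i → 1 ≤ j → 2 ≤ i + j → i + j ≤ k →
      mul (e i) (e j) = (((i + j - 1).choose j : ℕ) : ℂ) • e (i + j) := by
  suffices h : ∀ s i j, i + j ≤ s → 1 ≤ i → 1 ≤ j → i + j ≤ k →
      mul (e i) (e j) = (((i + j - 1).choose j : ℕ) : ℂ) • e (i + j) by
    intro i j hi hj _ hk'
    exact h (i + j) i j le_rfl hi hj hk'
  intro s
  induction s with
  | zero => intro i j hs hi hj _; omega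
  | succ s ih =>
    intro i j hs hi hj hk'
    match i, hi with
    | 1, _ =>
      have h1 := he j hj (by omega)
      rw [show 1 + j - 1 = j by omega, Nat.choose_self, Nat.cast_one, one_smul,
        show 1 + j = j + 1 by omega]
      exact h1
    | (i' + 2), _ =>
      have hi' : 1 ≤ i' + 1 := by omega
      have h1 : mul (e 1) (e (i' + 1)) = e (i' + 2) := he (i' + 1) hi' (by omega)
      have hz := hzin (e 1) (e (i' + 1)) (e j)
      rw [h1, ih (i' + 1) j (by omega) hi' hj (by omega),
        ih j (i' + 1) (by omega) hj hi' (by omega)] at hz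
      rw [map_smul, map_smul] at hz
      rw [show j + (i' + 1) = i' + 1 + j by omega] at hz
      rw [he (i' + 1 + j) (by omega) (by omega)] at hz
      rw [hz, ← add_smul, ← Nat.cast_add]
      have hcoef : (i' + 1 + j - 1).choose j + (i' + 1 + j - 1).choose (i' + 1)
          = (i' + 2 + j - 1).choose j := by
        obtain ⟨j', rfl⟩ : ∃ j', j = j' + 1 := ⟨j - 1, by omega⟩
        rw [show i' + 1 + (j' + 1) - 1 = i' + j' + 1 by omega,
          show i' + 2 + (j' + 1) - 1 = i' + j' + 1 + 1 by omega]
        rw [Nat.choose_succ_succ (i' + j' + 1) j']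
        have hsymm : (i' + j' + 1).choose (i' + 1) = (i' + j' + 1).choose j' := by
          rw [← Nat.choose_symm (by omega : i' + 1 ≤ i' + j' + 1),
            show i' + j' + 1 - (i' + 1) = j' by omega]
        rw [hsymm]
        simp only [Nat.succ_eq_add_one]
        omega
      rw [hcoef, show i' + 1 + j + 1 = i' + 2 + j by omega]
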